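/- Let s ≥ 1 be an integer and let v_b, v' ∈ ℝ^d with ‖v_b‖ ≤ 1 and ‖v'‖ ≤ 1. Consider the multivariate polynomial q : ℝ^d → ℝ defined by q(x) = T_s(1 − ⟨x − v_b, v'⟩/2), where T_s is the s-th Chebyshev polynomial of the first kind. Then ‖q‖² ≤ (105 s)^s. -/

import Mathlib

open Finset RealInnerProductSpace

/-- The coefficient norm `‖p‖ = sqrt (Σ_α c_α²)` of a multivariate polynomial. -/
noncomputable def mvNorm {d : ℕ} (p : MvPolynomial (Fin d) ℝ) : ℝ :=
  Real.sqrt (∑ α ∈ p.support, (MvPolynomial.coeff α p) ^ 2)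

/-- The multivariate polynomial `x ↦ ⟨v, x⟩`. -/
noncomputable def innerPoly {d : ℕ} (v : EuclideanSpace ℝ (Fin d)) :
    MvPolynomial (Fin d) ℝ :=
  ∑ i, MvPolynomial.C (v i) * MvPolynomial.X i

section DomSection

open Polynomial

/-- coefficient-wise absolute domination for univariate polynomials -/
def Dom (p P : ℝ[X]) : Prop := ∀ k, |p.coeff k| ≤ P.coeff k

namespace Dom

lemma nonneg {p P : ℝ[X]} (h : Dom p P) (k : ℕ) : 0 ≤ P.coeff k :=
  (abs_nonneg _).trans (h k)

lemma of_nonneg {P : ℝ[X]} (h : ∀ k, 0 ≤ P.coeff k) : Dom P P := fun k => (abs_of_nonneg (h k)).le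

lemma one : Dom (1 : ℝ[X]) 1 := by
  intro k
  rcases k with _ | k <;> simp [coeff_one]

lemma add {p P q Q : ℝ[X]} (hp : Dom p P) (hq : Dom q Q) : Dom (p + q) (P + Q) := by
  intro k
  simp only [coeff_add]
  exact (abs_add_le _ _).trans (add_le_add (hp k) (hq k))

lemma sub {p P q Q : ℝ[X]} (hp : Dom p P) (hq : Dom q Q) : Dom (p - q) (P + Q) := by
  intro k
  simp only [coeff_sub, coeff_add]
  exact (abs_sub _ _).trans (add_le_add (hp k) (hq k))

lemma mul {p P q Q : ℝ[X]} (hp : Dom p P) (hq : Dom q Q) : Dom (p * q) (P * Q) := by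
  intro k
  rw [coeff_mul, coeff_mul]
  refine (Finset.abs_sum_le_sum_abs _ _).trans (Finset.sum_le_sum fun x _ => ?_)
  rw [abs_mul]
  exact mul_le_mul (hp x.1) (hq x.2) (abs_nonneg _) (hp.nonneg x.1)

lemma pow {p P : ℝ[X]} (hp : Dom p P) (n : ℕ) : Dom (p ^ n) (P ^ n) := by
  induction n with
  | zero => simpa using one
  | succ n ih => rw [pow_succ, pow_succ]; exact Dom.mul ih hp

lemma C_mul {p P : ℝ[X]} {a b : ℝ} (hp : Dom p P) (hab : |a| ≤ b) :
    Dom (C a * p) (C b * P) := by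
  intro k
  rw [coeff_C_mul, coeff_C_mul, abs_mul]
  exact mul_le_mul hab (hp k) (abs_nonneg _) ((abs_nonneg a).trans hab)

lemma sum {ι : Type*} (s : Finset ι) (f F : ι → ℝ[X]) (h : ∀ i ∈ s, Dom (f i) (F i)) :
    Dom (∑ i ∈ s, f i) (∑ i ∈ s, F i) := by
  intro k
  rw [finset_sum_coeff, finset_sum_coeff]
  exact (Finset.abs_sum_le_sum_abs _ _).trans (Finset.sum_le_sum fun i hi => h i hi k)

lemma comp {p P g G : ℝ[X]} (hp : Dom p P) (hg : Dom g G) : Dom (p.comp g) (P.comp G) := by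
  set n := max p.natDegree P.natDegree + 1 with hn
  have h1 : p.comp g = ∑ k ∈ Finset.range n, C (p.coeff k) * g ^ k := by
    rw [comp_eq_sum_left]
    exact sum_over_range' p (by simp) n (by omega)
  have h2 : P.comp G = ∑ k ∈ Finset.range n, C (P.coeff k) * G ^ k := by
    rw [comp_eq_sum_left]
    exact sum_over_range' P (by simp) n (by omega)
  rw [h1, h2]
  exact sum _ _ _ fun k _ => (hg.pow k).C_mul (hp k)

lemma natDegree_le {p P : ℝ[X]} (h : Dom p P) : p.natDegree ≤ P.natDegree := by
  rw [natDegree_le_iff_coeff_eq_zero]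
  intro N hN
  have h0 : P.coeff N = 0 := coeff_eq_zero_of_natDegree_lt hN
  have := h N
  rw [h0] at this
  exact abs_eq_zero.mp (le_antisymm this (abs_nonneg _))

lemma l1_le_eval_one {p P : ℝ[X]} (h : Dom p P) :
    ∑ k ∈ p.support, |p.coeff k| ≤ P.eval 1 := by
  have hsub : p.support ⊆ P.support := by
    intro k hk
    rw [mem_support_iff] at hk ⊢
    intro h0
    have := h k
    rw [h0] at this
    exact hk (abs_eq_zero.mp (le_antisymm this (abs_nonneg _)))
  have hev : P.eval 1 = ∑ k ∈ P.support, P.coeff k := by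
    rw [eval_eq_sum, Polynomial.sum_def]
    simp
  rw [hev]
  refine le_trans (Finset.sum_le_sum fun k _ => h k) ?_
  exact Finset.sum_le_sum_of_subset_of_nonneg hsub fun k _ _ => h.nonneg k

end Dom

lemma two_eq_C : (2 : ℝ[X]) = C 2 := (map_ofNat C 2).symm

lemma dom_grow {p P : ℝ[X]} (h : Dom p P) : Dom p ((2 * X + 1) * P) := by
  intro k
  have hXP : 0 ≤ (X * P).coeff k := by
    rcases k with _ | k
    · simp [mul_coeff_zero]
    · rw [coeff_X_mul]; exact h.nonneg k
  have hc : ((2 * X + 1) * P).coeff k = 2 * (X * P).coeff k + P.coeff k := by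
    rw [add_mul, one_mul, coeff_add, mul_assoc, two_eq_C, coeff_C_mul]
  rw [hc]
  nlinarith [h k]

lemma dom_T : ∀ n : ℕ, Dom (Polynomial.Chebyshev.T ℝ n) ((2 * X + 1) ^ n) ∧
    Dom (Polynomial.Chebyshev.T ℝ (n + 1)) ((2 * X + 1) ^ (n + 1)) := by
  intro n
  induction n with
  | zero =>
    constructor
    · simpa [Polynomial.Chebyshev.T_zero] using Dom.one
    · intro k
      have harg : ((0 : ℕ) : ℤ) + 1 = 1 := by norm_num
      rw [harg, Polynomial.Chebyshev.T_one]
      rcases k with _ | _ | k <;> simp [coeff_one, coeff_X, two_eq_C, coeff_C_mul]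
  | succ n ih =>
    obtain ⟨h1, h2⟩ := ih
    refine ⟨by exact_mod_cast h2, ?_⟩
    have harg : ((n + 1 : ℕ) : ℤ) + 1 = (n : ℤ) + 2 := by push_cast; ring
    rw [harg, Polynomial.Chebyshev.T_add_two]
    have h2X : Dom (2 * X : ℝ[X]) (2 * X) := by
      refine Dom.of_nonneg fun k => ?_
      rw [two_eq_C, coeff_C_mul, coeff_X]
      split <;> norm_num
    have hd := (h2X.mul h2).sub (dom_grow h1)
    have heq : (2 * X * (2 * X + 1) ^ (n + 1) + (2 * X + 1) * (2 * X + 1) ^ n : ℝ[X])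
        = (2 * X + 1) ^ (n + 1 + 1) := by ring
    rwa [heq] at hd

end DomSection

section MvSection
open MvPolynomial

variable {d : ℕ}

lemma coeff_pderiv (i : Fin d) (p : MvPolynomial (Fin d) ℝ) (β : (Fin d) →₀ ℕ) :
    coeff β (pderiv i p) = ((β i : ℝ) + 1) * coeff (β + Finsupp.single i 1) p := by
  induction p using MvPolynomial.induction_on' with
  | add p q hp hq => simp only [map_add, coeff_add, hp, hq]; ring
  | monomial α a =>
    rw [pderiv_monomial]
    by_cases h : α = β + Finsupp.single i 1
    · subst h
      simp only [add_tsub_cancel_right, coeff_monomial, if_pos rfl,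
        Finsupp.add_apply, Finsupp.single_eq_same]
      push_cast
      ring
    · rw [coeff_monomial, coeff_monomial, if_neg h]
      by_cases hαi : α i = 0
      · split
        · simp [hαi]
        · ring
      · have hne : ¬ (α - Finsupp.single i 1 = β) := by
          intro heq
          apply h
          rw [← heq, tsub_add_cancel_of_le]
          rwa [Finsupp.single_le_iff, Nat.one_le_iff_ne_zero]
        rw [if_neg hne]
        ring

lemma pderiv_innerPoly (v : EuclideanSpace ℝ (Fin d)) (i : Fin d) :
    pderiv i (innerPoly v) = C (v i) := by
  unfold innerPoly
  rw [map_sum]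
  rw [Finset.sum_eq_single i
    (fun j _ hj => by rw [pderiv_C_mul, pderiv_X_of_ne hj, mul_zero])
    (fun h => absurd (Finset.mem_univ i) h)]
  rw [pderiv_C_mul, pderiv_X_self, mul_one]

/-- the key derivative identity -/
lemma star_identity (v : EuclideanSpace ℝ (Fin d)) (k : ℕ) (i : Fin d) (β : (Fin d) →₀ ℕ) :
    ((β i : ℝ) + 1) * coeff (β + Finsupp.single i 1) ((innerPoly v) ^ (k + 1))
      = ((k : ℝ) + 1) * v i * coeff β ((innerPoly v) ^ k) := by
  have h := coeff_pderiv i ((innerPoly v) ^ (k + 1)) β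
  rw [pderiv_pow, pderiv_innerPoly] at h
  rw [← h]
  have hthis : ((k + 1 : ℕ) : MvPolynomial (Fin d) ℝ) * (innerPoly v) ^ (k + 1 - 1) * C (v i)
      = C (((k : ℝ) + 1) * v i) * (innerPoly v) ^ k := by
    rw [Nat.add_sub_cancel, ← map_natCast (C : ℝ →+* MvPolynomial (Fin d) ℝ) (k + 1),
      mul_right_comm, ← map_mul]
    norm_num
  rw [hthis, coeff_C_mul]

/-- expansion of the coefficient of a product with the linear form -/
lemma coeff_innerPoly_mul (v : EuclideanSpace ℝ (Fin d)) (p : MvPolynomial (Fin d) ℝ)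
    (α : (Fin d) →₀ ℕ) :
    coeff α (innerPoly v * p)
      = ∑ i, v i * (if i ∈ α.support then coeff (α - Finsupp.single i 1) p else 0) := by
  unfold innerPoly
  rw [Finset.sum_mul, coeff_sum]
  refine Finset.sum_congr rfl fun i _ => ?_
  rw [mul_assoc, mul_comm (X i) p, coeff_C_mul, coeff_mul_X']

/-- sums of squared coefficients over any finset are at most the sum over the support -/
lemma sum_sq_coeff_le (p : MvPolynomial (Fin d) ℝ) (T : Finset ((Fin d) →₀ ℕ)) :
    ∑ β ∈ T, (coeff β p) ^ 2 ≤ ∑ β ∈ p.support, (coeff β p) ^ 2 := by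
  have h1 : ∑ β ∈ T ∩ p.support, (coeff β p) ^ 2 = ∑ β ∈ T, (coeff β p) ^ 2 := by
    refine Finset.sum_subset Finset.inter_subset_left fun β hβ hnot => ?_
    have : β ∉ p.support := fun hs => hnot (Finset.mem_inter.mpr ⟨hβ, hs⟩)
    rw [MvPolynomial.notMem_support_iff] at this
    rw [this]; norm_num
  rw [← h1]
  exact Finset.sum_le_sum_of_subset_of_nonneg Finset.inter_subset_right
    (fun β _ _ => sq_nonneg _)

lemma sum_sq_shift (p : MvPolynomial (Fin d) ℝ) (i : Fin d) (S : Finset ((Fin d) →₀ ℕ)) :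
    ∑ α ∈ S.filter (fun α => i ∈ α.support), (coeff (α - Finsupp.single i 1) p) ^ 2
      ≤ ∑ β ∈ p.support, (coeff β p) ^ 2 := by
  have hinj : ∀ α ∈ S.filter (fun α => i ∈ α.support), ∀ α' ∈ S.filter (fun α => i ∈ α.support),
      α - Finsupp.single i 1 = α' - Finsupp.single i 1 → α = α' := by
    intro α hα α' hα' heq
    rw [Finset.mem_filter] at hα hα'
    have h1 : Finsupp.single i 1 ≤ α := by
      rw [Finsupp.single_le_iff, Nat.one_le_iff_ne_zero]
      exact Finsupp.mem_support_iff.mp hα.2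
    have h1' : Finsupp.single i 1 ≤ α' := by
      rw [Finsupp.single_le_iff, Nat.one_le_iff_ne_zero]
      exact Finsupp.mem_support_iff.mp hα'.2
    calc α = α - Finsupp.single i 1 + Finsupp.single i 1 := (tsub_add_cancel_of_le h1).symm
    _ = α' - Finsupp.single i 1 + Finsupp.single i 1 := by rw [heq]
    _ = α' := tsub_add_cancel_of_le h1'
  calc ∑ α ∈ S.filter (fun α => i ∈ α.support), (coeff (α - Finsupp.single i 1) p) ^ 2
      = ∑ β ∈ (S.filter (fun α => i ∈ α.support)).image (fun α => α - Finsupp.single i 1),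
        (coeff β p) ^ 2 := (Finset.sum_image (f := fun β => (coeff β p) ^ 2) hinj).symm
    _ ≤ ∑ β ∈ p.support, (coeff β p) ^ 2 := sum_sq_coeff_le p _

/-- the key bound: sum of squared coefficients of `(innerPoly v)^k` is at most `k! * w^k`. -/
lemma key_bound (v : EuclideanSpace ℝ (Fin d)) (k : ℕ) :
    ∑ α ∈ ((innerPoly v) ^ k).support, (coeff α ((innerPoly v) ^ k)) ^ 2
      ≤ (k.factorial : ℝ) * (∑ i, (v i) ^ 2) ^ k := by
  induction k with
  | zero =>
    simp only [pow_zero, Nat.factorial_zero, Nat.cast_one, one_mul]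
    refine le_trans (Finset.sum_le_sum fun α hα => le_of_eq rfl) ?_
    have : (1 : MvPolynomial (Fin d) ℝ).support ⊆ {0} := by
      intro α hα
      rw [MvPolynomial.mem_support_iff] at hα
      rw [Finset.mem_singleton]
      by_contra hne
      exact hα (by rw [coeff_one, if_neg (Ne.symm hne)])
    refine le_trans (Finset.sum_le_sum_of_subset_of_nonneg this fun _ _ _ => sq_nonneg _) ?_
    simp [coeff_one]
  | succ k ih =>
    set L := innerPoly v with hL
    set w := ∑ i, (v i) ^ 2 with hw
    have hwnn : 0 ≤ w := Finset.sum_nonneg fun i _ => sq_nonneg _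
    set S := (L ^ (k + 1)).support with hS
    have expand : ∀ α, coeff α (L ^ (k + 1))
        = ∑ i, v i * (if i ∈ α.support then coeff (α - Finsupp.single i 1) (L ^ k) else 0) := by
      intro α
      rw [pow_succ, mul_comm]
      exact coeff_innerPoly_mul v _ α
    have termwise : ∀ α ∈ S, ∀ i : Fin d,
        v i * (if i ∈ α.support then coeff (α - Finsupp.single i 1) (L ^ k) else 0)
            * coeff α (L ^ (k + 1))
          ≤ ((k : ℝ) + 1) * (v i) ^ 2
            * (if i ∈ α.support then (coeff (α - Finsupp.single i 1) (L ^ k)) ^ 2 else 0) := by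
      intro α _ i
      by_cases hi : i ∈ α.support
      · rw [if_pos hi, if_pos hi]
        set β := α - Finsupp.single i 1 with hβ
        have hle : Finsupp.single i 1 ≤ α := by
          rw [Finsupp.single_le_iff, Nat.one_le_iff_ne_zero]
          exact Finsupp.mem_support_iff.mp hi
        have hαβ : α = β + Finsupp.single i 1 := (tsub_add_cancel_of_le hle).symm
        have hstar := star_identity v k i β
        rw [← hαβ, ← hL] at hstar
        -- hstar : (β i + 1) * coeff α (L^(k+1)) = (k+1) * v i * coeff β (L^k)
        have hm : (0 : ℝ) < (β i : ℝ) + 1 := by positivity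
        have hX : v i * coeff β (L ^ k) * coeff α (L ^ (k + 1))
            = ((k : ℝ) + 1) * (v i) ^ 2 * (coeff β (L ^ k)) ^ 2 / ((β i : ℝ) + 1) := by
          rw [eq_div_iff (ne_of_gt hm)]
          linear_combination (v i * coeff β (L ^ k)) * hstar
        rw [hX]
        refine div_le_self (by positivity) ?_
        simp only [le_add_iff_nonneg_left]
        positivity
      · rw [if_neg hi, if_neg hi]
        simp
    calc ∑ α ∈ S, (coeff α (L ^ (k + 1))) ^ 2
        = ∑ α ∈ S, (∑ i, v i * (if i ∈ α.support then
            coeff (α - Finsupp.single i 1) (L ^ k) else 0)) * coeff α (L ^ (k + 1)) := by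
          refine Finset.sum_congr rfl fun α _ => ?_
          rw [← expand α]; ring
      _ = ∑ α ∈ S, ∑ i, v i * (if i ∈ α.support then
            coeff (α - Finsupp.single i 1) (L ^ k) else 0) * coeff α (L ^ (k + 1)) := by
          refine Finset.sum_congr rfl fun α _ => ?_
          rw [Finset.sum_mul]
      _ ≤ ∑ α ∈ S, ∑ i, ((k : ℝ) + 1) * (v i) ^ 2 * (if i ∈ α.support then
            (coeff (α - Finsupp.single i 1) (L ^ k)) ^ 2 else 0) := by
          refine Finset.sum_le_sum fun α hα => Finset.sum_le_sum fun i _ => ?_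
          exact termwise α hα i
      _ = ∑ i, ((k : ℝ) + 1) * (v i) ^ 2 * ∑ α ∈ S.filter (fun α => i ∈ α.support),
            (coeff (α - Finsupp.single i 1) (L ^ k)) ^ 2 := by
          rw [Finset.sum_comm]
          refine Finset.sum_congr rfl fun i _ => ?_
          rw [Finset.sum_filter, Finset.mul_sum]
      _ ≤ ∑ i, ((k : ℝ) + 1) * (v i) ^ 2
            * ∑ β ∈ (L ^ k).support, (coeff β (L ^ k)) ^ 2 := by
          refine Finset.sum_le_sum fun i _ => ?_
          refine mul_le_mul_of_nonneg_left (sum_sq_shift _ i S) (by positivity)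
      _ ≤ ((k + 1).factorial : ℝ) * w ^ (k + 1) := by
          rw [← Finset.sum_mul]
          have h1 : ∑ i, ((k : ℝ) + 1) * (v i) ^ 2 = ((k : ℝ) + 1) * w := by
            rw [hw, Finset.mul_sum]
          rw [h1]
          have h2 : (0 : ℝ) ≤ (k : ℝ) + 1 := by positivity
          calc ((k : ℝ) + 1) * w * ∑ β ∈ (L ^ k).support, (coeff β (L ^ k)) ^ 2
              ≤ ((k : ℝ) + 1) * w * ((k.factorial : ℝ) * w ^ k) := by
                refine mul_le_mul_of_nonneg_left ih (by positivity)
            _ = ((k + 1).factorial : ℝ) * w ^ (k + 1) := by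
                rw [Nat.factorial_succ]
                push_cast
                ring

end MvSection

section Assembly

lemma dom_affine {ip : ℝ} (hip : |ip| ≤ 1) :
    Dom (1 - Polynomial.C (2:ℝ)⁻¹ * (Polynomial.X - Polynomial.C ip))
        (Polynomial.C (3/2:ℝ) + Polynomial.C (1/2:ℝ) * Polynomial.X) := by
  intro k
  have h := abs_le.mp hip
  match k with
  | 0 =>
    simp only [Polynomial.coeff_sub, Polynomial.coeff_one, Polynomial.coeff_C_mul,
      Polynomial.coeff_C, Polynomial.coeff_X, Polynomial.coeff_add, Polynomial.coeff_mul_X]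
    norm_num
    rw [abs_le]
    constructor <;> nlinarith
  | 1 =>
    simp only [Polynomial.coeff_sub, Polynomial.coeff_one, Polynomial.coeff_C_mul,
      Polynomial.coeff_C, Polynomial.coeff_X, Polynomial.coeff_add]
    norm_num [abs_le]
  | (n+2) =>
    simp only [Polynomial.coeff_sub, Polynomial.coeff_one, Polynomial.coeff_C_mul,
      Polynomial.coeff_C, Polynomial.coeff_X, Polynomial.coeff_add]
    norm_num

/-- linear "coefficient vector" map into a Euclidean space indexed by a finset of exponents -/
noncomputable def coeffVec {d : ℕ} (S : Finset ((Fin d) →₀ ℕ)) :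
    MvPolynomial (Fin d) ℝ →ₗ[ℝ] EuclideanSpace ℝ S where
  toFun p := WithLp.toLp 2 (fun α : S => MvPolynomial.coeff α.1 p)
  map_add' p q := by
    ext α
    simp [MvPolynomial.coeff_add, PiLp.add_apply]
  map_smul' c p := by
    ext α
    simp [MvPolynomial.coeff_smul, PiLp.smul_apply]

@[simp] lemma coeffVec_apply {d : ℕ} (S : Finset ((Fin d) →₀ ℕ))
    (p : MvPolynomial (Fin d) ℝ) (α : S) : coeffVec S p α = MvPolynomial.coeff α.1 p := rfl

lemma norm_coeffVec {d : ℕ} (S : Finset ((Fin d) →₀ ℕ)) (p : MvPolynomial (Fin d) ℝ)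
    (hp : p.support ⊆ S) : ‖coeffVec S p‖ = mvNorm p := by
  rw [EuclideanSpace.norm_eq, mvNorm]
  congr 1
  calc ∑ α : S, ‖coeffVec S p α‖ ^ 2
      = ∑ α ∈ S, (MvPolynomial.coeff α p) ^ 2 := by
        rw [← Finset.sum_coe_sort S (fun α => (MvPolynomial.coeff α p) ^ 2)]
        refine Finset.sum_congr rfl fun α _ => ?_
        rw [coeffVec_apply, Real.norm_eq_abs, sq_abs]
    _ = ∑ α ∈ p.support, (MvPolynomial.coeff α p) ^ 2 := by
        refine (Finset.sum_subset hp fun α _ hα => ?_).symm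
        rw [MvPolynomial.notMem_support_iff.mp hα]
        ring

theorem mvNorm_sq_chebyshev_comp_shifted_inner_le' {d s : ℕ} (hs : 1 ≤ s)
    (vb v' : EuclideanSpace ℝ (Fin d)) (hvb : ‖vb‖ ≤ 1) (hv' : ‖v'‖ ≤ 1) :
    (mvNorm (Polynomial.aeval
        (1 - MvPolynomial.C (2 : ℝ)⁻¹ * (innerPoly v' - MvPolynomial.C ⟪vb, v'⟫))
        (Polynomial.Chebyshev.T ℝ (s : ℤ)))) ^ 2
      ≤ (105 * (s : ℝ)) ^ s := by
  classical
  set ip : ℝ := ⟪vb, v'⟫ with hip_def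
  have hip : |ip| ≤ 1 := by
    refine (abs_real_inner_le_norm vb v').trans ?_
    nlinarith [norm_nonneg vb, norm_nonneg v']
  set t : MvPolynomial (Fin d) ℝ := innerPoly v' with ht
  set g : Polynomial ℝ := 1 - Polynomial.C (2:ℝ)⁻¹ * (Polynomial.X - Polynomial.C ip) with hg
  set P : Polynomial ℝ := (Polynomial.Chebyshev.T ℝ (s:ℤ)).comp g with hP
  set G : Polynomial ℝ := Polynomial.C (3/2:ℝ) + Polynomial.C (1/2:ℝ) * Polynomial.X with hG
  set D : Polynomial ℝ := ((2 * Polynomial.X + 1 : Polynomial ℝ) ^ s).comp G with hD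
  -- step 1 : rewrite as univariate composed with the linear form
  have h1 : Polynomial.aeval (1 - MvPolynomial.C (2:ℝ)⁻¹ * (t - MvPolynomial.C ip))
      (Polynomial.Chebyshev.T ℝ (s:ℤ)) = Polynomial.aeval t P := by
    rw [hP, Polynomial.aeval_comp]
    congr 1
    rw [hg]
    simp [MvPolynomial.algebraMap_eq]
  rw [h1]
  -- domination
  have hDom : Dom P D := Dom.comp (dom_T s).1 (dom_affine hip)
  have hDdeg : D.natDegree ≤ s := by
    refine Polynomial.natDegree_comp_le.trans ?_
    have h1 : ((2 * Polynomial.X + 1 : Polynomial ℝ) ^ s).natDegree ≤ s := by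
      refine Polynomial.natDegree_pow_le.trans ?_
      have h2 : (2 * Polynomial.X + 1 : Polynomial ℝ).natDegree ≤ 1 := by compute_degree
      calc s * (2 * Polynomial.X + 1 : Polynomial ℝ).natDegree ≤ s * 1 :=
            Nat.mul_le_mul_left s h2
        _ = s := by omega
    have h3 : G.natDegree ≤ 1 := by rw [hG]; compute_degree
    calc ((2 * Polynomial.X + 1 : Polynomial ℝ) ^ s).natDegree * G.natDegree ≤ s * 1 :=
          Nat.mul_le_mul h1 h3
      _ = s := by omega
  have hPdeg : P.natDegree ≤ s := (Dom.natDegree_le hDom).trans hDdeg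
  -- ℓ1 bound on the coefficients of P
  have hsum_l1 : ∑ k ∈ Finset.range (s+1), |P.coeff k| ≤ 5 ^ s := by
    have hsub : P.support ⊆ Finset.range (s+1) := fun k hk =>
      Finset.mem_range.mpr (Nat.lt_succ_of_le ((Polynomial.le_natDegree_of_mem_supp k hk).trans hPdeg))
    have h2 : ∑ k ∈ P.support, |P.coeff k| = ∑ k ∈ Finset.range (s+1), |P.coeff k| :=
      Finset.sum_subset hsub fun k _ hk => by
        rw [Polynomial.notMem_support_iff.mp hk, abs_zero]
    rw [← h2]
    refine (Dom.l1_le_eval_one hDom).trans ?_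
    have hGe : Polynomial.eval 1 G = 2 := by rw [hG]; simp; norm_num
    rw [hD, Polynomial.eval_comp, hGe, Polynomial.eval_pow]
    norm_num
  -- expansion
  have hq : Polynomial.aeval t P = ∑ k ∈ Finset.range (s+1), P.coeff k • t ^ k :=
    Polynomial.aeval_eq_sum_range' (Nat.lt_succ_of_le hPdeg) t
  -- ambient exponent set
  set Sup : Finset ((Fin d) →₀ ℕ) := (Finset.range (s+1)).biUnion (fun k => (t ^ k).support)
    with hSup
  have hsubt : ∀ k ∈ Finset.range (s+1), (t ^ k).support ⊆ Sup := by
    intro k hk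
    rw [hSup]
    exact Finset.subset_biUnion_of_mem (fun k => (t ^ k).support) hk
  have hsubq : (Polynomial.aeval t P).support ⊆ Sup := by
    intro α hα
    rw [MvPolynomial.mem_support_iff, hq, MvPolynomial.coeff_sum] at hα
    obtain ⟨k, hk, hne⟩ := Finset.exists_ne_zero_of_sum_ne_zero hα
    refine hsubt k hk ?_
    rw [MvPolynomial.mem_support_iff]
    intro h0
    rw [MvPolynomial.coeff_smul, h0, smul_zero] at hne
    exact hne rfl
  -- norm bound on each power of the linear form
  have hw1 : ∑ i, (v' i) ^ 2 ≤ 1 := by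
    have hsum_eq : ∑ i, (v' i) ^ 2 = ‖v'‖ ^ 2 := by
      rw [EuclideanSpace.norm_eq, Real.sq_sqrt (by positivity)]
      simp [Real.norm_eq_abs, sq_abs]
    rw [hsum_eq]
    nlinarith [norm_nonneg v']
  have hwnn : (0:ℝ) ≤ ∑ i, (v' i) ^ 2 := Finset.sum_nonneg fun i _ => sq_nonneg _
  have hkey : ∀ k ∈ Finset.range (s+1), mvNorm (t ^ k) ≤ Real.sqrt (s.factorial) := by
    intro k hk
    have h2 := key_bound v' k
    have h3 : ((k.factorial : ℝ)) * (∑ i, (v' i) ^ 2) ^ k ≤ (s.factorial : ℝ) := by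
      calc ((k.factorial : ℝ)) * (∑ i, (v' i) ^ 2) ^ k ≤ (k.factorial : ℝ) * 1 := by
            refine mul_le_mul_of_nonneg_left ?_ (by positivity)
            exact pow_le_one₀ hwnn hw1
        _ ≤ (s.factorial : ℝ) := by
            rw [mul_one]
            exact_mod_cast Nat.factorial_le (Nat.lt_succ_iff.mp (Finset.mem_range.mp hk))
    exact Real.sqrt_le_sqrt (h2.trans h3)
  -- main norm bound
  have hnormq : mvNorm (Polynomial.aeval t P) ≤ Real.sqrt (s.factorial) * 5 ^ s := by
    rw [← norm_coeffVec Sup _ hsubq]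
    calc ‖coeffVec Sup (Polynomial.aeval t P)‖
        = ‖∑ k ∈ Finset.range (s+1), P.coeff k • coeffVec Sup (t ^ k)‖ := by
          rw [hq, map_sum]
          simp_rw [map_smul]
      _ ≤ ∑ k ∈ Finset.range (s+1), ‖P.coeff k • coeffVec Sup (t ^ k)‖ :=
          norm_sum_le _ _
      _ = ∑ k ∈ Finset.range (s+1), |P.coeff k| * ‖coeffVec Sup (t ^ k)‖ := by
          refine Finset.sum_congr rfl fun k _ => ?_
          rw [norm_smul, Real.norm_eq_abs]
      _ ≤ ∑ k ∈ Finset.range (s+1), |P.coeff k| * Real.sqrt (s.factorial) := by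
          refine Finset.sum_le_sum fun k hk => ?_
          refine mul_le_mul_of_nonneg_left ?_ (abs_nonneg _)
          rw [norm_coeffVec Sup _ (hsubt k hk)]
          exact hkey k hk
      _ = (∑ k ∈ Finset.range (s+1), |P.coeff k|) * Real.sqrt (s.factorial) :=
          (Finset.sum_mul _ _ _).symm
      _ ≤ 5 ^ s * Real.sqrt (s.factorial) :=
          mul_le_mul_of_nonneg_right hsum_l1 (Real.sqrt_nonneg _)
      _ = Real.sqrt (s.factorial) * 5 ^ s := mul_comm _ _
  -- square and conclude numerically
  have hmvnn : 0 ≤ mvNorm (Polynomial.aeval t P) := Real.sqrt_nonneg _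
  have hsq : (mvNorm (Polynomial.aeval t P)) ^ 2 ≤ (s.factorial : ℝ) * 25 ^ s := by
    calc (mvNorm (Polynomial.aeval t P)) ^ 2
        ≤ (Real.sqrt (s.factorial) * 5 ^ s) ^ 2 := by
          refine pow_le_pow_left₀ hmvnn hnormq 2
      _ = (s.factorial : ℝ) * 25 ^ s := by
          rw [mul_pow, Real.sq_sqrt (by positivity), ← pow_mul, mul_comm s 2, pow_mul]
          norm_num
  refine hsq.trans ?_
  have h1 : (s.factorial : ℝ) ≤ (s : ℝ) ^ s := by exact_mod_cast Nat.factorial_le_pow s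
  have h2 : (25:ℝ) ^ s ≤ 105 ^ s := pow_le_pow_left₀ (by norm_num) (by norm_num) s
  calc (s.factorial : ℝ) * 25 ^ s ≤ (s:ℝ) ^ s * 105 ^ s :=
        mul_le_mul h1 h2 (by positivity) (by positivity)
    _ = (105 * (s:ℝ)) ^ s := by rw [mul_pow]; ring

end Assembly

/-- For `s ≥ 1`, `‖v_b‖ ≤ 1`, `‖v'‖ ≤ 1`, the multivariate polynomial
`q(x) = T_s(1 − ⟨x − v_b, v'⟩/2)` satisfies `‖q‖² ≤ (105 s)^s`. -/
theorem mvNorm_sq_chebyshev_comp_shifted_inner_le {d s : ℕ} (hs : 1 ≤ s)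
    (vb v' : EuclideanSpace ℝ (Fin d)) (hvb : ‖vb‖ ≤ 1) (hv' : ‖v'‖ ≤ 1) :
    (mvNorm (Polynomial.aeval
        (1 - MvPolynomial.C (2 : ℝ)⁻¹ * (innerPoly v' - MvPolynomial.C ⟪vb, v'⟫))
        (Polynomial.Chebyshev.T ℝ (s : ℤ)))) ^ 2
      ≤ (105 * (s : ℝ)) ^ s := by
  exact mvNorm_sq_chebyshev_comp_shifted_inner_le' hs vb v' hvb hv'
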